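/- (Theorem 2) Under Assumptions 1 and 2, define δ₁ := C₀C₁/m² + C₂/m, δ₂ := C₀²C₁/(2m³) + C₀C₂/m² + C₃/(2m), Q := 2m/C₁, and σ := 1 + h·δ₁. Let c > 0 be any constant. If the sampling period satisfies h ≤ min{1, [Q^{2τ−1}·c / ((1+δ₁)·c + δ₂)^{2τ}]^{1/(4τ−2)}}, and the initial error satisfies ‖x₀ − x*(t₀)‖ ≤ c·h², then the NTT iterates satisfy, for all k ≥ 1: ‖x_k − x*(t_k)‖ ≤ Q^{−(2τ−1)}·(σc + δ₂)^{2τ}·h^{4τ}. -/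

import Mathlib

noncomputable section

/-- The setting of a time-varying, smooth, strongly convex optimization problem
`min_{x ∈ ℝⁿ} f(x;t)`, bundling the objective `f`, its derivatives, the Hessian
inverse, the optimal trajectory `x*(t)`, and Assumptions 1 and 2 of the paper. -/
structure TVOpt (n : ℕ) where
  /-- the objective `f(x;t)` -/
  f : EuclideanSpace ℝ (Fin n) → ℝ → ℝ
  /-- the gradient `∇ₓ f(x;t)` -/
  grad : EuclideanSpace ℝ (Fin n) → ℝ → EuclideanSpace ℝ (Fin n)
  /-- the Hessian `∇ₓₓ f(x;t)` -/
  hess : EuclideanSpace ℝ (Fin n) → ℝ →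
    EuclideanSpace ℝ (Fin n) →L[ℝ] EuclideanSpace ℝ (Fin n)
  /-- the Hessian inverse `[∇ₓₓ f(x;t)]⁻¹` -/
  hessInv : EuclideanSpace ℝ (Fin n) → ℝ →
    EuclideanSpace ℝ (Fin n) →L[ℝ] EuclideanSpace ℝ (Fin n)
  /-- the mixed partial derivative `∇_{tx} f(x;t)` -/
  dtgrad : EuclideanSpace ℝ (Fin n) → ℝ → EuclideanSpace ℝ (Fin n)
  /-- the third derivative tensor `∇ₓₓₓ f(x;t)` -/
  d3 : EuclideanSpace ℝ (Fin n) → ℝ →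
    EuclideanSpace ℝ (Fin n) →L[ℝ] EuclideanSpace ℝ (Fin n) →L[ℝ] EuclideanSpace ℝ (Fin n)
  /-- the time derivative of the Hessian `∇_{xtx} f(x;t)` -/
  dthess : EuclideanSpace ℝ (Fin n) → ℝ →
    EuclideanSpace ℝ (Fin n) →L[ℝ] EuclideanSpace ℝ (Fin n)
  /-- the second time derivative of the gradient `∇_{ttx} f(x;t)` -/
  dttgrad : EuclideanSpace ℝ (Fin n) → ℝ → EuclideanSpace ℝ (Fin n)
  /-- the optimal trajectory `x*(t)` -/
  xstar : ℝ → EuclideanSpace ℝ (Fin n)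
  /-- strong convexity constant -/
  m : ℝ
  /-- Hessian norm bound (gradient Lipschitz constant) -/
  L : ℝ
  C0 : ℝ
  C1 : ℝ
  C2 : ℝ
  C3 : ℝ
  m_pos : 0 < m
  grad_spec : ∀ (x : EuclideanSpace ℝ (Fin n)) (t : ℝ), HasGradientAt (fun y => f y t) (grad x t) x
  hess_spec : ∀ (x : EuclideanSpace ℝ (Fin n)) (t : ℝ), HasFDerivAt (fun y => grad y t) (hess x t) x
  dtgrad_spec : ∀ (x : EuclideanSpace ℝ (Fin n)) (t : ℝ), HasDerivAt (fun s => grad x s) (dtgrad x t) t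
  d3_spec : ∀ (x : EuclideanSpace ℝ (Fin n)) (t : ℝ), HasFDerivAt (fun y => hess y t) (d3 x t) x
  dthess_spec : ∀ (x : EuclideanSpace ℝ (Fin n)) (t : ℝ), HasDerivAt (fun s => hess x s) (dthess x t) t
  dttgrad_spec : ∀ (x : EuclideanSpace ℝ (Fin n)) (t : ℝ), HasDerivAt (fun s => dtgrad x s) (dttgrad x t) t
  /-- Assumption 1: `∇ₓₓ f(x;t) ⪰ m·I` uniformly in `x` and `t`. -/
  strong_convex : ∀ (x : EuclideanSpace ℝ (Fin n)) (t : ℝ) (v : EuclideanSpace ℝ (Fin n)),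
    m * ‖v‖ ^ 2 ≤ @inner ℝ _ _ v (hess x t v)
  hessInv_left : ∀ (x : EuclideanSpace ℝ (Fin n)) (t : ℝ), ContinuousLinearMap.comp (hessInv x t) (hess x t) =
    ContinuousLinearMap.id ℝ (EuclideanSpace ℝ (Fin n))
  hessInv_right : ∀ (x : EuclideanSpace ℝ (Fin n)) (t : ℝ), ContinuousLinearMap.comp (hess x t) (hessInv x t) =
    ContinuousLinearMap.id ℝ (EuclideanSpace ℝ (Fin n))
  /-- Assumption 2: bounded derivatives, uniformly in `x` and `t`. -/
  hess_bound : ∀ (x : EuclideanSpace ℝ (Fin n)) (t : ℝ), ‖hess x t‖ ≤ L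
  dtgrad_bound : ∀ (x : EuclideanSpace ℝ (Fin n)) (t : ℝ), ‖dtgrad x t‖ ≤ C0
  d3_bound : ∀ (x : EuclideanSpace ℝ (Fin n)) (t : ℝ), ‖d3 x t‖ ≤ C1
  dthess_bound : ∀ (x : EuclideanSpace ℝ (Fin n)) (t : ℝ), ‖dthess x t‖ ≤ C2
  dttgrad_bound : ∀ (x : EuclideanSpace ℝ (Fin n)) (t : ℝ), ‖dttgrad x t‖ ≤ C3
  /-- `x*(t)` minimizes `f(·;t)` -/
  xstar_min : ∀ t : ℝ, IsMinOn (fun x => f x t) Set.univ (xstar t)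
  /-- equivalently, `∇ₓ f(x*(t);t) = 0` -/
  xstar_grad : ∀ t : ℝ, grad (xstar t) t = 0

namespace NTT

variable {n : ℕ}

local notation "E" => EuclideanSpace ℝ (Fin n)

lemma C0_nonneg (P : TVOpt n) : 0 ≤ P.C0 := le_trans (norm_nonneg _) (P.dtgrad_bound 0 0)
lemma C1_nonneg (P : TVOpt n) : 0 ≤ P.C1 := le_trans (norm_nonneg (P.d3 0 0)) (P.d3_bound 0 0)
lemma C2_nonneg (P : TVOpt n) : 0 ≤ P.C2 := le_trans (norm_nonneg (P.dthess 0 0)) (P.dthess_bound 0 0)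
lemma C3_nonneg (P : TVOpt n) : 0 ≤ P.C3 := le_trans (norm_nonneg _) (P.dttgrad_bound 0 0)

lemma hess_apply_inv (P : TVOpt n) (x : E) (t : ℝ) (v : E) :
    P.hess x t (P.hessInv x t v) = v := by
  have := congrArg (fun (A : E →L[ℝ] E) => A v) (P.hessInv_right x t)
  simpa using this

lemma hessInv_apply_hess (P : TVOpt n) (x : E) (t : ℝ) (v : E) :
    P.hessInv x t (P.hess x t v) = v := by
  have := congrArg (fun (A : E →L[ℝ] E) => A v) (P.hessInv_left x t)
  simpa using this

lemma hessInv_apply_norm (P : TVOpt n) (x : E) (t : ℝ) (v : E) :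
    ‖P.hessInv x t v‖ ≤ ‖v‖ / P.m := by
  set w := P.hessInv x t v with hw
  have h1 : P.hess x t w = v := hess_apply_inv P x t v
  have h2 := P.strong_convex x t w
  rw [h1] at h2
  have h3 : (inner ℝ w v : ℝ) ≤ ‖w‖ * ‖v‖ := real_inner_le_norm _ _
  rw [le_div_iff₀ P.m_pos]
  rcases eq_or_lt_of_le (norm_nonneg w) with h0 | h0
  · rw [← h0]; simpa using norm_nonneg v
  · nlinarith

lemma ftc_quad {V : Type*} [NormedAddCommGroup V] [NormedSpace ℝ V] [CompleteSpace V]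
    {F F' : ℝ → V} {K b : ℝ} (hb : 0 ≤ b)
    (hF : ∀ r, HasDerivAt F (F' r) r) (hF' : Continuous F')
    (hK : ∀ r ∈ Set.Ioc 0 b, ‖F' r‖ ≤ K * r) :
    ‖F b - F 0‖ ≤ K * b ^ 2 / 2 := by
  rcases eq_or_lt_of_le hb with rfl | hb'
  · simp
  have hint : ∫ r in (0:ℝ)..b, F' r = F b - F 0 :=
    intervalIntegral.integral_eq_sub_of_hasDerivAt (fun r _ => hF r)
      (hF'.intervalIntegrable 0 b)
  have hK0 : 0 ≤ K := by
    have h1 := hK b ⟨hb', le_refl b⟩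
    nlinarith [norm_nonneg (F' b)]
  rw [← hint]
  have hbound : ‖∫ r in (0:ℝ)..b, F' r‖ ≤ |∫ r in (0:ℝ)..b, K * r| := by
    apply intervalIntegral.norm_integral_le_abs_of_norm_le
    · filter_upwards [MeasureTheory.ae_restrict_mem measurableSet_uIoc] with r hr
      rw [Set.uIoc_of_le hb] at hr
      exact hK r hr
    · exact (continuous_const.mul continuous_id).intervalIntegrable 0 b
  calc ‖∫ r in (0:ℝ)..b, F' r‖ ≤ |∫ r in (0:ℝ)..b, K * r| := hbound
    _ = K * b ^ 2 / 2 := by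
        rw [intervalIntegral.integral_const_mul, integral_id]
        rw [abs_of_nonneg (by nlinarith [sq_nonneg b])]
        ring

lemma hess_lip_x (P : TVOpt n) (t : ℝ) (x y : E) :
    ‖P.hess y t - P.hess x t‖ ≤ P.C1 * ‖y - x‖ :=
  Convex.norm_image_sub_le_of_norm_hasFDerivWithin_le
    (fun z _ => (P.d3_spec z t).hasFDerivWithinAt) (fun z _ => P.d3_bound z t)
    convex_univ trivial trivial

lemma hess_lip_t (P : TVOpt n) (x : E) (s t : ℝ) :
    ‖P.hess x t - P.hess x s‖ ≤ P.C2 * ‖t - s‖ :=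
  Convex.norm_image_sub_le_of_norm_hasDerivWithin_le
    (fun r _ => (P.dthess_spec x r).hasDerivWithinAt) (fun r _ => P.dthess_bound x r)
    convex_univ trivial trivial

lemma dtgrad_lip_t (P : TVOpt n) (x : E) (s t : ℝ) :
    ‖P.dtgrad x t - P.dtgrad x s‖ ≤ P.C3 * ‖t - s‖ :=
  Convex.norm_image_sub_le_of_norm_hasDerivWithin_le
    (fun r _ => (P.dttgrad_spec x r).hasDerivWithinAt) (fun r _ => P.dttgrad_bound x r)
    convex_univ trivial trivial

/-- derivative of the gradient along a line -/
lemma line_grad_deriv (P : TVOpt n) (t : ℝ) (x d : E) (r : ℝ) :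
    HasDerivAt (fun r : ℝ => P.grad (x + r • d) t) (P.hess (x + r • d) t d) r := by
  have hline : HasDerivAt (fun r : ℝ => x + r • d) d r := by
    simpa using ((hasDerivAt_id r).smul_const d).const_add x
  have := (P.hess_spec (x + r • d) t).comp_hasDerivAt r hline
  exact this

lemma hess_cont (P : TVOpt n) (t : ℝ) : Continuous fun y : E => P.hess y t :=
  continuous_iff_continuousAt.2 fun y => (P.d3_spec y t).continuousAt

lemma taylor_x (P : TVOpt n) (t : ℝ) (x y : E) :
    ‖P.grad y t - P.grad x t - P.hess x t (y - x)‖ ≤ P.C1 / 2 * ‖y - x‖ ^ 2 := by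
  set d := y - x with hd
  have hF : ∀ r : ℝ, HasDerivAt (fun r : ℝ => P.grad (x + r • d) t - r • P.hess x t d)
      (P.hess (x + r • d) t d - P.hess x t d) r := fun r => by
    have := (line_grad_deriv P t x d r).sub ((hasDerivAt_id r).smul_const (P.hess x t d))
    simp only [one_smul] at this
    exact this
  have hF' : Continuous fun r : ℝ => P.hess (x + r • d) t d - P.hess x t d := by
    have h1 : Continuous fun r : ℝ => P.hess (x + r • d) t :=
      (hess_cont P t).comp (by continuity)
    exact (h1.clm_apply continuous_const).sub continuous_const
  have hK : ∀ r ∈ Set.Ioc (0:ℝ) 1,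
      ‖P.hess (x + r • d) t d - P.hess x t d‖ ≤ (P.C1 * ‖d‖ ^ 2) * r := by
    intro r hr
    have h1 : ‖P.hess (x + r • d) t d - P.hess x t d‖
        ≤ ‖P.hess (x + r • d) t - P.hess x t‖ * ‖d‖ := by
      rw [← ContinuousLinearMap.sub_apply]
      exact ContinuousLinearMap.le_opNorm _ d
    have h2 : ‖P.hess (x + r • d) t - P.hess x t‖ ≤ P.C1 * (r * ‖d‖) := by
      have h3 := hess_lip_x P t x (x + r • d)
      rwa [add_sub_cancel_left, norm_smul, Real.norm_eq_abs,
        abs_of_nonneg hr.1.le] at h3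
    calc ‖P.hess (x + r • d) t d - P.hess x t d‖ ≤ (P.C1 * (r * ‖d‖)) * ‖d‖ :=
          h1.trans (by apply mul_le_mul_of_nonneg_right h2 (norm_nonneg d))
      _ = (P.C1 * ‖d‖ ^ 2) * r := by ring
  have := ftc_quad (le_of_lt one_pos) hF hF' hK
  simp only [one_smul, zero_smul, one_pow] at this
  have he : x + d = y := by rw [hd]; abel
  rw [he, add_zero, sub_zero] at this
  calc ‖P.grad y t - P.grad x t - P.hess x t d‖
      = ‖P.grad y t - P.hess x t d - P.grad x t‖ := by rw [show P.grad y t - P.grad x t - P.hess x t d = P.grad y t - P.hess x t d - P.grad x t by abel]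
    _ ≤ P.C1 * ‖d‖ ^ 2 * 1 ^ 2 / 2 := by simpa using this
    _ = P.C1 / 2 * ‖d‖ ^ 2 := by ring

lemma taylor_t (P : TVOpt n) (x : E) (t h : ℝ) (hh : 0 ≤ h) :
    ‖P.grad x (t + h) - P.grad x t - h • P.dtgrad x t‖ ≤ P.C3 / 2 * h ^ 2 := by
  have hF : ∀ s : ℝ, HasDerivAt (fun s : ℝ => P.grad x (t + s) - s • P.dtgrad x t)
      (P.dtgrad x (t + s) - P.dtgrad x t) s := fun s => by
    have h1 : HasDerivAt (fun s : ℝ => P.grad x (t + s)) (P.dtgrad x (t + s)) s := by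
      have hline : HasDerivAt (fun s : ℝ => t + s) 1 s := by
        simpa using (hasDerivAt_id s).const_add t
      have := (P.dtgrad_spec x (t + s)).scomp s hline
      simp only [one_smul] at this
      exact this
    have := h1.sub ((hasDerivAt_id s).smul_const (P.dtgrad x t))
    simp only [one_smul] at this
    exact this
  have hF' : Continuous fun s : ℝ => P.dtgrad x (t + s) - P.dtgrad x t := by
    have h1 : Continuous fun u : ℝ => P.dtgrad x u :=
      continuous_iff_continuousAt.2 fun u => (P.dttgrad_spec x u).continuousAt
    exact (h1.comp (by continuity)).sub continuous_const
  have hK : ∀ s ∈ Set.Ioc (0:ℝ) h, ‖P.dtgrad x (t + s) - P.dtgrad x t‖ ≤ P.C3 * s := by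
    intro s hs
    have := dtgrad_lip_t P x t (t + s)
    rwa [add_sub_cancel_left, Real.norm_eq_abs, abs_of_nonneg hs.1.le] at this
  have := ftc_quad hh hF hF' hK
  simp only [zero_smul, add_zero, sub_zero] at this
  calc ‖P.grad x (t + h) - P.grad x t - h • P.dtgrad x t‖
      = ‖P.grad x (t + h) - h • P.dtgrad x t - P.grad x t‖ := by
        rw [show P.grad x (t + h) - P.grad x t - h • P.dtgrad x t
          = P.grad x (t + h) - h • P.dtgrad x t - P.grad x t by abel]
    _ ≤ P.C3 * h ^ 2 / 2 := this
    _ = P.C3 / 2 * h ^ 2 := by ring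

lemma dtgrad_lip_x (P : TVOpt n) (t : ℝ) (x y : E) :
    ‖P.dtgrad y t - P.dtgrad x t‖ ≤ P.C2 * ‖y - x‖ := by
  set d := y - x with hd
  have key : ∀ s u : ℝ, ‖(P.grad y u - P.grad x u) - (P.grad y s - P.grad x s)‖
      ≤ P.C2 * ‖d‖ * ‖u - s‖ := by
    intro s u
    have hψ : ∀ r : ℝ, HasDerivWithinAt
        (fun r : ℝ => P.grad (x + r • d) u - P.grad (x + r • d) s)
        ((P.hess (x + r • d) u) d - (P.hess (x + r • d) s) d) Set.univ r := fun r =>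
      ((line_grad_deriv P u x d r).sub (line_grad_deriv P s x d r)).hasDerivWithinAt
    have hbound : ∀ r : ℝ, ‖(P.hess (x + r • d) u) d - (P.hess (x + r • d) s) d‖
        ≤ P.C2 * ‖u - s‖ * ‖d‖ := by
      intro r
      calc ‖(P.hess (x + r • d) u) d - (P.hess (x + r • d) s) d‖
          ≤ ‖P.hess (x + r • d) u - P.hess (x + r • d) s‖ * ‖d‖ := by
            rw [← ContinuousLinearMap.sub_apply]
            exact ContinuousLinearMap.le_opNorm _ d
        _ ≤ (P.C2 * ‖u - s‖) * ‖d‖ :=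
            mul_le_mul_of_nonneg_right (hess_lip_t P (x + r • d) s u) (norm_nonneg d)
        _ = P.C2 * ‖u - s‖ * ‖d‖ := by ring
    have := Convex.norm_image_sub_le_of_norm_hasDerivWithin_le
      (fun r _ => hψ r) (fun r _ => hbound r) convex_univ (Set.mem_univ (0:ℝ))
      (Set.mem_univ (1:ℝ))
    have he : x + (1:ℝ) • d = y := by rw [hd, one_smul]; abel
    rw [he] at this
    simp only [zero_smul, add_zero] at this
    calc ‖(P.grad y u - P.grad x u) - (P.grad y s - P.grad x s)‖
        = ‖(P.grad y u - P.grad y s) - (P.grad x u - P.grad x s)‖ := by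
          rw [show (P.grad y u - P.grad x u) - (P.grad y s - P.grad x s)
            = (P.grad y u - P.grad y s) - (P.grad x u - P.grad x s) by abel]
      _ ≤ P.C2 * ‖u - s‖ * ‖d‖ * ‖(1:ℝ) - 0‖ := this
      _ = P.C2 * ‖d‖ * ‖u - s‖ := by
          rw [show ‖(1:ℝ) - 0‖ = 1 by simp]; ring
  have hlip : LipschitzWith (P.C2 * ‖d‖).toNNReal (fun u => P.grad y u - P.grad x u) := by
    apply LipschitzWith.of_dist_le_mul
    intro u s
    rw [dist_eq_norm, dist_eq_norm]
    calc ‖(P.grad y u - P.grad x u) - (P.grad y s - P.grad x s)‖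
        ≤ P.C2 * ‖d‖ * ‖u - s‖ := key s u
      _ = ((P.C2 * ‖d‖).toNNReal : ℝ) * ‖u - s‖ := by
          rw [Real.coe_toNNReal _ (mul_nonneg (C2_nonneg P) (norm_nonneg d))]
  have hD : HasFDerivAt (fun u => P.grad y u - P.grad x u)
      ((1 : ℝ →L[ℝ] ℝ).smulRight (P.dtgrad y t - P.dtgrad x t)) t :=
    ((P.dtgrad_spec y t).sub (P.dtgrad_spec x t)).hasFDerivAt
  have hle := hD.le_of_lipschitz hlip
  rw [ContinuousLinearMap.norm_smulRight_apply] at hle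
  rw [norm_one, one_mul] at hle
  calc ‖P.dtgrad y t - P.dtgrad x t‖ ≤ ((P.C2 * ‖d‖).toNNReal : ℝ) := hle
    _ = P.C2 * ‖d‖ := Real.coe_toNNReal _ (mul_nonneg (C2_nonneg P) (norm_nonneg d))

lemma strong_mono (P : TVOpt n) (t : ℝ) (x y : E) :
    P.m * ‖y - x‖ ≤ ‖P.grad y t - P.grad x t‖ := by
  set d := y - x with hd
  have hg : ∀ s : ℝ, HasDerivAt
      (fun s : ℝ => (inner ℝ d (P.grad (x + s • d) t) : ℝ) - s * (P.m * ‖d‖ ^ 2))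
      ((inner ℝ d (P.hess (x + s • d) t d) : ℝ) - P.m * ‖d‖ ^ 2) s := fun s => by
    have h1 : HasDerivAt (fun s : ℝ => (inner ℝ d (P.grad (x + s • d) t) : ℝ))
        ((inner ℝ d (P.hess (x + s • d) t d) : ℝ)) s := by
      have := (innerSL ℝ d).hasFDerivAt.comp_hasDerivAt s (line_grad_deriv P t x d s)
      exact this
    have := h1.sub ((hasDerivAt_id s).mul_const (P.m * ‖d‖ ^ 2))
    simp only [one_mul] at this
    exact this
  have hmono : Monotone fun s : ℝ =>
      (inner ℝ d (P.grad (x + s • d) t) : ℝ) - s * (P.m * ‖d‖ ^ 2) := by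
    apply monotone_of_deriv_nonneg
    · exact fun s => (hg s).differentiableAt
    · intro s
      rw [(hg s).deriv]
      have := P.strong_convex (x + s • d) t d
      linarith
  have h01 := hmono (zero_le_one (α := ℝ))
  simp only [zero_smul, add_zero, zero_mul, sub_zero, one_smul, one_mul] at h01
  have he : x + d = y := by rw [hd]; abel
  rw [he] at h01
  have hin : P.m * ‖d‖ ^ 2 ≤ (inner ℝ d (P.grad y t - P.grad x t) : ℝ) := by
    rw [inner_sub_right]; linarith
  have hcs : (inner ℝ d (P.grad y t - P.grad x t) : ℝ) ≤ ‖d‖ * ‖P.grad y t - P.grad x t‖ :=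
    real_inner_le_norm _ _
  rcases eq_or_lt_of_le (norm_nonneg d) with h0 | h0
  · rw [← h0, mul_zero]; exact norm_nonneg _
  · nlinarith

lemma strong_mono' (P : TVOpt n) (t : ℝ) (y : E) :
    P.m * ‖y - P.xstar t‖ ≤ ‖P.grad y t‖ := by
  have := strong_mono P t (P.xstar t) y
  rwa [P.xstar_grad t, sub_zero] at this

lemma newton_step (P : TVOpt n) (t : ℝ) (y : E) :
    ‖(y - P.hessInv y t (P.grad y t)) - P.xstar t‖
      ≤ P.C1 / (2 * P.m) * ‖y - P.xstar t‖ ^ 2 := by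
  set z := P.xstar t with hz
  have h1 : P.hessInv y t (P.hess y t (z - y)) = z - y := hessInv_apply_hess P y t _
  have hid : (y - P.hessInv y t (P.grad y t)) - z
      = P.hessInv y t (P.grad z t - P.grad y t - P.hess y t (z - y)) := by
    rw [map_sub, map_sub, h1, hz, P.xstar_grad t, map_zero]
    abel
  rw [hid]
  have h2 := hessInv_apply_norm P y t (P.grad z t - P.grad y t - P.hess y t (z - y))
  have h3 := taylor_x P t y z
  have h4 : ‖z - y‖ = ‖y - z‖ := norm_sub_rev _ _
  rw [h4] at h3
  calc ‖P.hessInv y t (P.grad z t - P.grad y t - P.hess y t (z - y))‖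
      ≤ ‖P.grad z t - P.grad y t - P.hess y t (z - y)‖ / P.m := h2
    _ ≤ (P.C1 / 2 * ‖y - z‖ ^ 2) / P.m := by
        gcongr
        exact P.m_pos.le
    _ = P.C1 / (2 * P.m) * ‖y - z‖ ^ 2 := by
        rw [div_mul_eq_mul_div, div_div, mul_div_assoc]
        rw [mul_comm (2:ℝ) P.m, mul_comm, div_mul_eq_mul_div, mul_div_assoc, mul_comm]

lemma u_lip (P : TVOpt n) (t : ℝ) (x y : E) :
    ‖P.hessInv y t (P.dtgrad y t) - P.hessInv x t (P.dtgrad x t)‖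
      ≤ (P.C0 * P.C1 / P.m ^ 2 + P.C2 / P.m) * ‖y - x‖ := by
  set w := P.hessInv x t (P.dtgrad x t) with hw
  have h1 : P.hess x t w = P.dtgrad x t := hess_apply_inv P x t _
  have h2 : P.hessInv y t (P.hess y t w) = w := hessInv_apply_hess P y t w
  have split : P.hessInv y t (P.dtgrad y t) - P.hessInv x t (P.dtgrad x t)
      = P.hessInv y t (P.dtgrad y t - P.dtgrad x t)
        + P.hessInv y t ((P.hess x t - P.hess y t) w) := by
    rw [ContinuousLinearMap.sub_apply, map_sub, map_sub, h2, h1]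
    abel
  rw [split]
  have hb1 : ‖P.hessInv y t (P.dtgrad y t - P.dtgrad x t)‖
      ≤ (P.C2 * ‖y - x‖) / P.m :=
    (hessInv_apply_norm P y t _).trans
      (by gcongr; exacts [P.m_pos.le, dtgrad_lip_x P t x y])
  have hw0 : ‖w‖ ≤ P.C0 / P.m := by
    refine (hessInv_apply_norm P x t _).trans ?_
    gcongr
    exacts [P.m_pos.le, P.dtgrad_bound x t]
  have hb2 : ‖P.hessInv y t ((P.hess x t - P.hess y t) w)‖
      ≤ P.C1 * ‖y - x‖ * (P.C0 / P.m) / P.m := by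
    refine (hessInv_apply_norm P y t _).trans ?_
    gcongr
    · exact P.m_pos.le
    calc ‖(P.hess x t - P.hess y t) w‖ ≤ ‖P.hess x t - P.hess y t‖ * ‖w‖ :=
          ContinuousLinearMap.le_opNorm _ w
      _ ≤ (P.C1 * ‖y - x‖) * (P.C0 / P.m) := by
          have := hess_lip_x P t y x
          rw [norm_sub_rev x y] at this
          apply mul_le_mul this hw0 (norm_nonneg w)
          exact mul_nonneg (C1_nonneg P) (norm_nonneg _)
  calc ‖P.hessInv y t (P.dtgrad y t - P.dtgrad x t)
          + P.hessInv y t ((P.hess x t - P.hess y t) w)‖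
      ≤ ‖P.hessInv y t (P.dtgrad y t - P.dtgrad x t)‖
          + ‖P.hessInv y t ((P.hess x t - P.hess y t) w)‖ := norm_add_le _ _
    _ ≤ (P.C2 * ‖y - x‖) / P.m + P.C1 * ‖y - x‖ * (P.C0 / P.m) / P.m :=
        add_le_add hb1 hb2
    _ = (P.C0 * P.C1 / P.m ^ 2 + P.C2 / P.m) * ‖y - x‖ := by
        field_simp
        ring

lemma xstar_taylor (P : TVOpt n) (t h : ℝ) (hh : 0 ≤ h) :
    ‖P.xstar (t + h) - (P.xstar t - h • P.hessInv (P.xstar t) t (P.dtgrad (P.xstar t) t))‖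
      ≤ (P.C0 ^ 2 * P.C1 / (2 * P.m ^ 3) + P.C0 * P.C2 / P.m ^ 2 + P.C3 / (2 * P.m)) * h ^ 2 := by
  set z := P.xstar t with hz
  set u := P.hessInv z t (P.dtgrad z t) with hu
  set p := z - h • u with hp
  have hu0 : ‖u‖ ≤ P.C0 / P.m := by
    refine (hessInv_apply_norm P z t _).trans ?_
    gcongr
    exacts [P.m_pos.le, P.dtgrad_bound z t]
  have hpz : p - z = -(h • u) := by rw [hp]; abel
  have hpzn : ‖p - z‖ = h * ‖u‖ := by
    rw [hpz, norm_neg, norm_smul, Real.norm_eq_abs, abs_of_nonneg hh]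
  -- the gradient at the predicted point
  have e1 : P.hess z t (p - z) = -(h • P.dtgrad z t) := by
    rw [hpz, map_neg, map_smul, hess_apply_inv]
  have hdecomp : P.grad p (t + h)
      = (P.grad p (t + h) - P.grad z (t + h) - P.hess z (t + h) (p - z))
        + (P.hess z (t + h) - P.hess z t) (p - z)
        + (P.grad z (t + h) - P.grad z t - h • P.dtgrad z t) := by
    rw [ContinuousLinearMap.sub_apply, e1, hz, P.xstar_grad t]
    abel
  have hA1 : ‖P.grad p (t + h) - P.grad z (t + h) - P.hess z (t + h) (p - z)‖
      ≤ P.C1 / 2 * (h * (P.C0 / P.m)) ^ 2 := by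
    refine (taylor_x P (t + h) z p).trans ?_
    rw [hpzn]
    have h1 : (h * ‖u‖) ^ 2 ≤ (h * (P.C0 / P.m)) ^ 2 :=
      pow_le_pow_left₀ (mul_nonneg hh (norm_nonneg u))
        (mul_le_mul_of_nonneg_left hu0 hh) 2
    have h2 : (0:ℝ) ≤ P.C1 / 2 := by linarith [C1_nonneg P]
    exact mul_le_mul_of_nonneg_left h1 h2
  have hA2 : ‖(P.hess z (t + h) - P.hess z t) (p - z)‖ ≤ (P.C2 * h) * (h * (P.C0 / P.m)) := by
    calc ‖(P.hess z (t + h) - P.hess z t) (p - z)‖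
        ≤ ‖P.hess z (t + h) - P.hess z t‖ * ‖p - z‖ := ContinuousLinearMap.le_opNorm _ _
      _ ≤ (P.C2 * h) * (h * (P.C0 / P.m)) := by
          have hl := hess_lip_t P z t (t + h)
          rw [add_sub_cancel_left, Real.norm_eq_abs, abs_of_nonneg hh] at hl
          rw [hpzn]
          exact mul_le_mul hl (mul_le_mul_of_nonneg_left hu0 hh)
            (mul_nonneg hh (norm_nonneg u)) (mul_nonneg (C2_nonneg P) hh)
  have hA3 : ‖P.grad z (t + h) - P.grad z t - h • P.dtgrad z t‖ ≤ P.C3 / 2 * h ^ 2 :=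
    taylor_t P z t h hh
  have hgb : ‖P.grad p (t + h)‖
      ≤ P.m * ((P.C0 ^ 2 * P.C1 / (2 * P.m ^ 3) + P.C0 * P.C2 / P.m ^ 2 + P.C3 / (2 * P.m)) * h ^ 2) := by
    rw [hdecomp]
    refine le_trans (norm_add₃_le) ?_
    have : P.C1 / 2 * (h * (P.C0 / P.m)) ^ 2 + (P.C2 * h) * (h * (P.C0 / P.m)) + P.C3 / 2 * h ^ 2
        = P.m * ((P.C0 ^ 2 * P.C1 / (2 * P.m ^ 3) + P.C0 * P.C2 / P.m ^ 2 + P.C3 / (2 * P.m)) * h ^ 2) := by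
      have hm : P.m ≠ 0 := P.m_pos.ne'
      field_simp
    linarith [add_le_add (add_le_add hA1 hA2) hA3]
  have hmono := strong_mono' P (t + h) p
  rw [norm_sub_rev]
  have := hmono.trans hgb
  calc ‖p - P.xstar (t + h)‖ = ‖P.xstar (t + h) - p‖ := norm_sub_rev _ _
    _ ≤ _ := by
        rw [norm_sub_rev (P.xstar (t+h)) p]
        nlinarith [norm_nonneg (p - P.xstar (t + h)), P.m_pos]

lemma prediction (P : TVOpt n) (t h : ℝ) (hh : 0 ≤ h) (y : E) :
    ‖(y - h • P.hessInv y t (P.dtgrad y t)) - P.xstar (t + h)‖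
      ≤ (1 + h * (P.C0 * P.C1 / P.m ^ 2 + P.C2 / P.m)) * ‖y - P.xstar t‖
        + (P.C0 ^ 2 * P.C1 / (2 * P.m ^ 3) + P.C0 * P.C2 / P.m ^ 2 + P.C3 / (2 * P.m)) * h ^ 2 := by
  set z := P.xstar t with hz
  set u := P.hessInv y t (P.dtgrad y t) with hu
  set us := P.hessInv z t (P.dtgrad z t) with hus
  have htri : (y - h • u) - P.xstar (t + h)
      = ((y - z) - h • (u - us)) + ((z - h • us) - P.xstar (t + h)) := by
    rw [smul_sub]; abel
  rw [htri]
  have h1 : ‖(y - z) - h • (u - us)‖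
      ≤ (1 + h * (P.C0 * P.C1 / P.m ^ 2 + P.C2 / P.m)) * ‖y - z‖ := by
    calc ‖(y - z) - h • (u - us)‖ ≤ ‖y - z‖ + ‖h • (u - us)‖ := norm_sub_le _ _
      _ = ‖y - z‖ + h * ‖u - us‖ := by
          rw [norm_smul, Real.norm_eq_abs, abs_of_nonneg hh]
      _ ≤ ‖y - z‖ + h * ((P.C0 * P.C1 / P.m ^ 2 + P.C2 / P.m) * ‖y - z‖) := by
          gcongr
          exact u_lip P t z y
      _ = (1 + h * (P.C0 * P.C1 / P.m ^ 2 + P.C2 / P.m)) * ‖y - z‖ := by ring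
  have h2 : ‖(z - h • us) - P.xstar (t + h)‖
      ≤ (P.C0 ^ 2 * P.C1 / (2 * P.m ^ 3) + P.C0 * P.C2 / P.m ^ 2 + P.C3 / (2 * P.m)) * h ^ 2 := by
    rw [norm_sub_rev]
    exact xstar_taylor P t h hh
  calc ‖((y - z) - h • (u - us)) + ((z - h • us) - P.xstar (t + h))‖
      ≤ ‖(y - z) - h • (u - us)‖ + ‖(z - h • us) - P.xstar (t + h)‖ := norm_add_le _ _
    _ ≤ _ := add_le_add h1 h2

lemma newton_iter (P : TVOpt n) (t : ℝ) (y : E) (r : ℝ)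
    (hr : ‖y - P.xstar t‖ ≤ r) (har : P.C1 / (2 * P.m) * r ≤ 1) :
    ∀ j : ℕ, ‖(fun w => w - P.hessInv w t (P.grad w t))^[j + 1] y - P.xstar t‖
      ≤ (P.C1 / (2 * P.m)) ^ (2 * j + 1) * r ^ (2 * j + 2) := by
  set a := P.C1 / (2 * P.m) with ha
  have ha0 : 0 ≤ a := div_nonneg (C1_nonneg P) (by linarith [P.m_pos])
  have hr0 : 0 ≤ r := le_trans (norm_nonneg _) hr
  have step : ∀ w : E, ‖(w - P.hessInv w t (P.grad w t)) - P.xstar t‖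
      ≤ a * ‖w - P.xstar t‖ ^ 2 := fun w => newton_step P t w
  intro j
  induction j with
  | zero =>
    simp only [Function.iterate_one, zero_add]
    calc ‖(y - P.hessInv y t (P.grad y t)) - P.xstar t‖ ≤ a * ‖y - P.xstar t‖ ^ 2 := step y
      _ ≤ a * r ^ 2 := by
          apply mul_le_mul_of_nonneg_left (pow_le_pow_left₀ (norm_nonneg _) hr 2) ha0
      _ = a ^ (2 * 0 + 1) * r ^ (2 * 0 + 2) := by ring
  | succ j ih =>
    have hstep := step ((fun w => w - P.hessInv w t (P.grad w t))^[j + 1] y)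
    rw [← Function.iterate_succ_apply' (fun w => w - P.hessInv w t (P.grad w t)) (j + 1) y] at hstep
    have h2 : ‖(fun w => w - P.hessInv w t (P.grad w t))^[j + 1] y - P.xstar t‖ ^ 2
        ≤ (a ^ (2 * j + 1) * r ^ (2 * j + 2)) ^ 2 :=
      pow_le_pow_left₀ (norm_nonneg _) ih 2
    calc ‖(fun w => w - P.hessInv w t (P.grad w t))^[j + 1 + 1] y - P.xstar t‖
        ≤ a * (a ^ (2 * j + 1) * r ^ (2 * j + 2)) ^ 2 :=
          hstep.trans (mul_le_mul_of_nonneg_left h2 ha0)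
      _ = (a ^ (2 * (j + 1) + 1) * r ^ (2 * (j + 1) + 2)) * (a * r) ^ (2 * j) := by ring
      _ ≤ (a ^ (2 * (j + 1) + 1) * r ^ (2 * (j + 1) + 2)) * 1 := by
          apply mul_le_mul_of_nonneg_left (pow_le_one₀ (mul_nonneg ha0 hr0) har)
          positivity
      _ = a ^ (2 * (j + 1) + 1) * r ^ (2 * (j + 1) + 2) := by ring

end NTT

set_option maxHeartbeats 1000000

/-- **Theorem 2.** Local convergence of Newton trajectory tracking (NTT):
if the sampling period and the initial error are small enough, the tracking error is
`O(h^(4τ))`. -/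
theorem ntt_convergence (n : ℕ) (P : TVOpt n) (h : ℝ) (hh : 0 < h)
    (τ : ℕ) (hτ : 1 ≤ τ) (hC1 : 0 < P.C1) (c : ℝ) (hc : 0 < c)
    (δ1 δ2 Q σ : ℝ)
    (hδ1 : δ1 = P.C0 * P.C1 / P.m ^ 2 + P.C2 / P.m)
    (hδ2 : δ2 = P.C0 ^ 2 * P.C1 / (2 * P.m ^ 3) + P.C0 * P.C2 / P.m ^ 2 + P.C3 / (2 * P.m))
    (hQ : Q = 2 * P.m / P.C1)
    (hσ : σ = 1 + h * δ1)
    (x : ℕ → EuclideanSpace ℝ (Fin n))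
    (hrec : ∀ k : ℕ, x (k + 1) =
      (fun y => y - P.hessInv y (((k : ℝ) + 1) * h) (P.grad y (((k : ℝ) + 1) * h)))^[τ]
        (x k - h • P.hessInv (x k) ((k : ℝ) * h) (P.dtgrad (x k) ((k : ℝ) * h))))
    (hsmall : h ≤ min 1 ((Q ^ (2 * τ - 1) * c / ((1 + δ1) * c + δ2) ^ (2 * τ)) ^
      ((1 : ℝ) / (4 * (τ : ℝ) - 2))))
    (hinit : ‖x 0 - P.xstar 0‖ ≤ c * h ^ 2) :
    ∀ k : ℕ, 1 ≤ k →
      ‖x k - P.xstar ((k : ℝ) * h)‖ ≤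
        (Q ^ (2 * τ - 1))⁻¹ * (σ * c + δ2) ^ (2 * τ) * h ^ (4 * τ) := by
  have hm := P.m_pos
  have hC0 := NTT.C0_nonneg P
  have hC2 := NTT.C2_nonneg P
  have hC3 := NTT.C3_nonneg P
  have hδ1' : 0 ≤ δ1 := by
    rw [hδ1]
    have := sq_nonneg P.m
    apply add_nonneg (div_nonneg (mul_nonneg hC0 hC1.le) (by positivity))
      (div_nonneg hC2 hm.le)
  have hδ2' : 0 ≤ δ2 := by
    rw [hδ2]
    apply add_nonneg (add_nonneg _ _) (div_nonneg hC3 (by linarith))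
    · exact div_nonneg (mul_nonneg (sq_nonneg _) hC1.le) (by positivity)
    · exact div_nonneg (mul_nonneg hC0 hC2) (by positivity)
  have hQpos : 0 < Q := by rw [hQ]; exact div_pos (by linarith) hC1
  set a := P.C1 / (2 * P.m) with ha
  have haQ : a = Q⁻¹ := by rw [hQ, ha, inv_div]
  have ha0 : 0 < a := div_pos hC1 (by linarith)
  set D := (1 + δ1) * c + δ2 with hD
  have hDpos : 0 < D := by nlinarith
  have hcD : c ≤ D := by nlinarith
  have h1 : h ≤ 1 := hsmall.trans (min_le_left _ _)
  have h2 : h ≤ (Q ^ (2*τ-1) * c / D ^ (2*τ)) ^ ((1:ℝ)/(4*(τ:ℝ)-2)) :=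
    hsmall.trans (min_le_right _ _)
  have hXpos : 0 < Q ^ (2*τ-1) * c / D ^ (2*τ) :=
    div_pos (mul_pos (pow_pos hQpos _) hc) (pow_pos hDpos _)
  have hτR : (1:ℝ) ≤ (τ:ℝ) := by exact_mod_cast hτ
  have hepos : (0:ℝ) < 4*(τ:ℝ) - 2 := by linarith
  have hX : h ^ (4*τ - 2) ≤ Q ^ (2*τ-1) * c / D ^ (2*τ) := by
    have hcast : ((4*τ - 2 : ℕ) : ℝ) = 4*(τ:ℝ) - 2 := by
      have h22 : 2 ≤ 4*τ := by omega
      rw [Nat.cast_sub h22]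
      push_cast
      ring
    calc h ^ (4*τ-2) = h ^ (((4*τ-2 : ℕ) : ℝ)) := (Real.rpow_natCast h _).symm
      _ = h ^ (4*(τ:ℝ)-2) := by rw [hcast]
      _ ≤ ((Q ^ (2*τ-1) * c / D ^ (2*τ)) ^ ((1:ℝ)/(4*(τ:ℝ)-2))) ^ (4*(τ:ℝ)-2) :=
          Real.rpow_le_rpow hh.le h2 hepos.le
      _ = Q ^ (2*τ-1) * c / D ^ (2*τ) := by
          rw [← Real.rpow_mul hXpos.le, one_div, inv_mul_cancel₀ hepos.ne', Real.rpow_one]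
  have hDh : D * h ^ 2 ≤ Q := by
    have hpow : (D * h^2) ^ (2*τ-1) ≤ Q ^ (2*τ-1) := by
      calc (D*h^2)^(2*τ-1) = D^(2*τ-1) * h^(4*τ-2) := by
            rw [mul_pow, ← pow_mul, show 2*(2*τ-1) = 4*τ-2 from by omega]
        _ ≤ D^(2*τ-1) * (Q^(2*τ-1)*c/D^(2*τ)) :=
            mul_le_mul_of_nonneg_left hX (pow_nonneg hDpos.le _)
        _ = Q^(2*τ-1) * (c / D) := by
            rw [show 2*τ = (2*τ-1)+1 from by omega, pow_succ]
            field_simp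
            ring_nf
            rw [show 1 + (τ * 2 - 1) - 1 = τ * 2 - 1 from by omega]
        _ ≤ Q^(2*τ-1) * 1 :=
            mul_le_mul_of_nonneg_left ((div_le_one hDpos).2 hcD) (pow_nonneg hQpos.le _)
        _ = Q^(2*τ-1) := mul_one _
    exact (pow_le_pow_iff_left₀ (mul_nonneg hDpos.le (sq_nonneg h)) hQpos.le (by omega)).1 hpow
  set r := (σ*c + δ2) * h^2 with hr
  have hσ1 : 1 ≤ σ := by rw [hσ]; nlinarith
  have hσle : σ ≤ 1 + δ1 := by rw [hσ]; nlinarith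
  have hrD : r ≤ D * h^2 := by
    rw [hr, hD]
    have h3 : σ * c ≤ (1 + δ1) * c := mul_le_mul_of_nonneg_right hσle hc.le
    nlinarith [sq_nonneg h]
  have hr0 : 0 ≤ r := by
    rw [hr]
    have : 0 ≤ σ * c := mul_nonneg (by linarith) hc.le
    positivity
  have har : a * r ≤ 1 := by
    rw [haQ]
    have hrQ : r ≤ Q := hrD.trans hDh
    calc Q⁻¹ * r ≤ Q⁻¹ * Q := mul_le_mul_of_nonneg_left hrQ (inv_nonneg.2 hQpos.le)
      _ = 1 := inv_mul_cancel₀ hQpos.ne'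
  set T := a ^ (2*τ-1) * r ^ (2*τ) with hT
  have hTgoal : T = (Q ^ (2 * τ - 1))⁻¹ * (σ * c + δ2) ^ (2 * τ) * h ^ (4 * τ) := by
    rw [hT, haQ, inv_pow, hr, mul_pow, ← pow_mul, show 2*(2*τ) = 4*τ from by ring]
    ring
  have hTle : T ≤ c * h^2 := by
    have h4 : h ^ (4*τ) = h ^ (4*τ-2) * h^2 := by
      rw [← pow_add, show 4*τ-2+2 = 4*τ from by omega]
    have hDr : r ^ (2*τ) ≤ D^(2*τ) * h^(4*τ) := by
      calc r ^ (2*τ) ≤ (D*h^2)^(2*τ) := pow_le_pow_left₀ hr0 hrD _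
        _ = D^(2*τ)*h^(4*τ) := by
            rw [mul_pow, ← pow_mul, show 2*(2*τ)=4*τ from by ring]
    calc T = a ^ (2*τ-1) * r ^ (2*τ) := hT
      _ ≤ a^(2*τ-1) * (D^(2*τ) * h^(4*τ)) :=
          mul_le_mul_of_nonneg_left hDr (pow_nonneg ha0.le _)
      _ = (h^(4*τ-2) * D^(2*τ) / Q^(2*τ-1)) * h^2 := by
          rw [haQ, inv_pow, h4]; ring
      _ ≤ c * h^2 := by
          apply mul_le_mul_of_nonneg_right _ (sq_nonneg h)
          rw [div_le_iff₀ (pow_pos hQpos _)]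
          calc h^(4*τ-2)*D^(2*τ) ≤ (Q^(2*τ-1)*c/D^(2*τ))*D^(2*τ) :=
                mul_le_mul_of_nonneg_right hX (pow_nonneg hDpos.le (2*τ))
            _ = c * Q^(2*τ-1) := by field_simp
  obtain ⟨j, rfl⟩ : ∃ j, τ = j + 1 := ⟨τ - 1, by omega⟩
  have main : ∀ k : ℕ, ‖x k - P.xstar ((k:ℝ)*h)‖ ≤ c * h^2 ∧
      (1 ≤ k → ‖x k - P.xstar ((k:ℝ)*h)‖ ≤ T) := by
    intro k
    induction k with
    | zero =>
      constructor
      · simpa using hinit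
      · intro hk; exact absurd hk (by omega)
    | succ k ih =>
      have hk1 := ih.1
      have hpred := NTT.prediction P ((k:ℝ)*h) h hh.le (x k)
      rw [← hδ1, ← hδ2] at hpred
      have hbound : ‖(x k - h • P.hessInv (x k) ((k:ℝ)*h) (P.dtgrad (x k) ((k:ℝ)*h)))
          - P.xstar ((k:ℝ)*h + h)‖ ≤ r := by
        refine hpred.trans ?_
        have h5 : (0:ℝ) ≤ 1 + h * δ1 := by nlinarith
        have h6 := mul_le_mul_of_nonneg_left hk1 h5
        rw [hr, hσ]
        nlinarith
      rw [show (k:ℝ)*h + h = ((k:ℝ)+1)*h from by ring] at hbound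
      have hit := NTT.newton_iter P (((k:ℝ)+1)*h) _ r hbound har j
      rw [← hrec k] at hit
      have hexp : a^(2*j+1) * r^(2*j+2) = T := by
        rw [hT, show 2*(j+1)-1 = 2*j+1 from by omega, show 2*(j+1) = 2*j+2 from by omega]
      rw [hexp] at hit
      have hcast : (((k+1:ℕ)):ℝ) = (k:ℝ)+1 := by push_cast; ring
      rw [hcast]
      exact ⟨hit.trans hTle, fun _ => hit⟩
  intro k hk
  rw [← hTgoal]
  exact (main k).2 hk
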